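/- Let η₀ > 0, T > 0, and let V : ℝ → ℝ be a function such that V t > 0 for all t ∈ [0, T] and, for every t ∈ [0, T], V has derivative V' t at t (HasDerivAt) with V' t ≤ −η₀ · Real.sqrt (2 · V t). Then Real.sqrt (V T) ≤ Real.sqrt (V 0) − (η₀ / Real.sqrt 2) · T; in particular T < Real.sqrt (2 · V 0) / η₀. -/

import Mathlib

/-- Finite-time reaching estimate: if `V > 0` on `[0, T]` and
`V' ≤ −η₀ √(2V)` there, then `√(V T) ≤ √(V 0) − (η₀/√2)·T`; in particular
`T < √(2 V 0)/η₀`. -/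
theorem finite_time_reaching (η₀ T : ℝ) (hη₀ : 0 < η₀) (hT : 0 < T)
    (V V' : ℝ → ℝ)
    (hVpos : ∀ t ∈ Set.Icc (0 : ℝ) T, 0 < V t)
    (hderiv : ∀ t ∈ Set.Icc (0 : ℝ) T, HasDerivAt V (V' t) t)
    (hbound : ∀ t ∈ Set.Icc (0 : ℝ) T, V' t ≤ -η₀ * Real.sqrt (2 * V t)) :
    Real.sqrt (V T) ≤ Real.sqrt (V 0) - η₀ / Real.sqrt 2 * T ∧
    T < Real.sqrt (2 * V 0) / η₀ := by
  set g : ℝ → ℝ := fun t => Real.sqrt (V t) + η₀ / Real.sqrt 2 * t with hg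
  have s2pos : (0:ℝ) < Real.sqrt 2 := Real.sqrt_pos.mpr (by norm_num)
  have hgd : ∀ t ∈ Set.Icc (0:ℝ) T,
      HasDerivAt g (1 / (2 * Real.sqrt (V t)) * V' t + η₀ / Real.sqrt 2) t := by
    intro t ht
    have h1 : HasDerivAt (fun s => Real.sqrt (V s)) (1 / (2 * Real.sqrt (V t)) * V' t) t :=
      (Real.hasDerivAt_sqrt (hVpos t ht).ne').comp t (hderiv t ht)
    have h2 : HasDerivAt (fun s : ℝ => η₀ / Real.sqrt 2 * s) (η₀ / Real.sqrt 2) t := by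
      simpa using (hasDerivAt_id t).const_mul (η₀ / Real.sqrt 2)
    exact h1.add h2
  have hgd_nonpos : ∀ t ∈ Set.Icc (0:ℝ) T,
      1 / (2 * Real.sqrt (V t)) * V' t + η₀ / Real.sqrt 2 ≤ 0 := by
    intro t ht
    have hVt := hVpos t ht
    have hs : (0:ℝ) < Real.sqrt (V t) := Real.sqrt_pos.mpr hVt
    have h2V : Real.sqrt (2 * V t) = Real.sqrt 2 * Real.sqrt (V t) :=
      Real.sqrt_mul (by norm_num) _
    have hb := hbound t ht
    have hmul : 1 / (2 * Real.sqrt (V t)) * V' t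
        ≤ 1 / (2 * Real.sqrt (V t)) * (-η₀ * Real.sqrt (2 * V t)) := by
      apply mul_le_mul_of_nonneg_left hb
      positivity
    have heq : 1 / (2 * Real.sqrt (V t)) * (-η₀ * Real.sqrt (2 * V t))
        = -(η₀ / Real.sqrt 2) := by
      rw [h2V]
      have h22 : Real.sqrt 2 * Real.sqrt 2 = 2 := Real.mul_self_sqrt (by norm_num)
      field_simp
      linear_combination (-1 : ℝ) * h22
    linarith [hmul, heq ▸ hmul]
  have hanti : AntitoneOn g (Set.Icc (0:ℝ) T) := by
    apply antitoneOn_of_deriv_nonpos (convex_Icc (0:ℝ) T)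
    · exact fun t ht => (hgd t ht).continuousAt.continuousWithinAt
    · intro t ht
      rw [interior_Icc] at ht
      exact (hgd t (Set.mem_Icc_of_Ioo ht)).differentiableAt.differentiableWithinAt
    · intro t ht
      rw [interior_Icc] at ht
      have := Set.mem_Icc_of_Ioo ht
      rw [(hgd t this).deriv]
      exact hgd_nonpos t this
  have hgT : g T ≤ g 0 :=
    hanti (Set.left_mem_Icc.mpr hT.le) (Set.right_mem_Icc.mpr hT.le) hT.le
  have h1 : Real.sqrt (V T) ≤ Real.sqrt (V 0) - η₀ / Real.sqrt 2 * T := by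
    simp only [hg] at hgT; linarith
  refine ⟨h1, ?_⟩
  have hsT : (0:ℝ) < Real.sqrt (V T) :=
    Real.sqrt_pos.mpr (hVpos T (Set.right_mem_Icc.mpr hT.le))
  have h2 : η₀ / Real.sqrt 2 * T < Real.sqrt (V 0) := by linarith
  have h2V0 : Real.sqrt (2 * V 0) = Real.sqrt 2 * Real.sqrt (V 0) :=
    Real.sqrt_mul (by norm_num) _
  rw [h2V0, lt_div_iff₀ hη₀]
  calc T * η₀ = (η₀ / Real.sqrt 2 * T) * Real.sqrt 2 := by field_simp
    _ < Real.sqrt (V 0) * Real.sqrt 2 := by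
        exact mul_lt_mul_of_pos_right h2 s2pos
    _ = Real.sqrt 2 * Real.sqrt (V 0) := mul_comm _ _
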